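/- arXiv:1712.05733 — 3 statements merged into one kernel-verified Lean document; each statement's English description precedes it below -/
import Mathlib

section
/- Let H be a symmetric d×d real matrix whose eigenvalues λ₁ ≤ ... ≤ λ_d satisfy λᵢ < 0 for i ≤ k and λᵢ > 0 for i > k, and let α > 0. Then the 2d×2d matrix A = [[0, I], [-H, -αI]] has exactly k eigenvalues (counted with multiplicity) with positive real part, namely μᵢ⁺ = (-α + √(α² - 4λᵢ))/2 for i = 1,...,k, and all other eigenvalues of A have negative real part. -/
open Polynomial Matrix

noncomputable def rpAux (a l : ℝ) : ℂ :=
  if 4*l ≤ a^2 then (((-a + Real.sqrt (a^2 - 4*l)) / 2 : ℝ) : ℂ)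
  else ⟨-a/2, Real.sqrt (4*l - a^2) / 2⟩

noncomputable def rnAux (a l : ℝ) : ℂ :=
  if 4*l ≤ a^2 then (((-a - Real.sqrt (a^2 - 4*l)) / 2 : ℝ) : ℂ)
  else ⟨-a/2, -(Real.sqrt (4*l - a^2) / 2)⟩

lemma rpAux_add_rnAux (a l : ℝ) : rpAux a l + rnAux a l = -(a:ℂ) := by
  unfold rpAux rnAux
  split_ifs with h
  · push_cast
    ring
  · apply Complex.ext <;> simp <;> ring

lemma rpAux_mul_rnAux (a l : ℝ) : rpAux a l * rnAux a l = (l:ℂ) := by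
  unfold rpAux rnAux
  split_ifs with h
  · rw [← Complex.ofReal_mul]
    norm_cast
    have hs : Real.sqrt (a^2-4*l) ^ 2 = a^2 - 4*l := Real.sq_sqrt (by linarith)
    linear_combination (-(1:ℝ)/4) * hs
  · have hs : Real.sqrt (4*l-a^2) ^ 2 = 4*l - a^2 := Real.sq_sqrt (by linarith)
    apply Complex.ext <;> simp [Complex.mul_re, Complex.mul_im]
    · nlinarith [hs]
    · ring

lemma rnAux_re (a l : ℝ) (ha : 0 < a) : (rnAux a l).re < 0 := by
  unfold rnAux
  split_ifs with h
  · simp only [Complex.ofReal_re]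
    have := Real.sqrt_nonneg (a^2-4*l)
    linarith
  · simp only
    linarith

lemma rpAux_eq (a l : ℝ) (hl : l < 0) :
    rpAux a l = (((-a + Real.sqrt (a^2 - 4*l)) / 2 : ℝ) : ℂ) := by
  unfold rpAux
  rw [if_pos (by nlinarith)]

lemma rpAux_re_pos (a l : ℝ) (ha : 0 < a) (hl : l < 0) : 0 < (rpAux a l).re := by
  rw [rpAux_eq a l hl]
  simp only [Complex.ofReal_re]
  have hs : Real.sqrt (a^2-4*l) ^ 2 = a^2 - 4*l := Real.sq_sqrt (by nlinarith)
  have h0 := Real.sqrt_nonneg (a^2-4*l)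
  nlinarith

lemma rpAux_re_neg (a l : ℝ) (ha : 0 < a) (hl : 0 < l) : (rpAux a l).re < 0 := by
  unfold rpAux
  split_ifs with h
  · simp only [Complex.ofReal_re]
    have hs : Real.sqrt (a^2-4*l) ^ 2 = a^2 - 4*l := Real.sq_sqrt (by linarith)
    have h0 := Real.sqrt_nonneg (a^2-4*l)
    nlinarith
  · simp only
    linarith

lemma quadFactorAux (a l : ℝ) :
    (X^2 + C (a:ℂ) * X + C (l:ℂ)) = (X - C (rpAux a l)) * (X - C (rnAux a l)) := by
  have h1 : (a:ℂ) = -(rpAux a l + rnAux a l) := by rw [rpAux_add_rnAux]; ring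
  rw [h1, ← rpAux_mul_rnAux a l]
  simp only [map_neg, map_add, _root_.map_mul]
  ring

lemma charmatrixMapEvalAux {n : Type*} [DecidableEq n] [Fintype n]
    (M : Matrix n n ℝ) (c : ℝ) :
    (charmatrix M).map (Polynomial.eval c) = c • (1 : Matrix n n ℝ) - M := by
  ext i j
  by_cases h : i = j <;>
    simp [charmatrix_apply, Matrix.map_apply, Matrix.one_apply, h, Matrix.diagonal_apply]

lemma evalCharpolyAux {n : Type*} [DecidableEq n] [Fintype n]
    (M : Matrix n n ℝ) (c : ℝ) :
    Polynomial.eval c M.charpoly = Matrix.det (c • (1 : Matrix n n ℝ) - M) := by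
  rw [Matrix.charpoly, show Polynomial.eval c (charmatrix M).det
      = (Polynomial.evalRingHom c) (charmatrix M).det from rfl, RingHom.map_det,
    RingHom.mapMatrix_apply, Polynomial.coe_evalRingHom, charmatrixMapEvalAux]

lemma detSmulOneAddAux {d : ℕ} (H : Matrix (Fin d) (Fin d) ℝ) (lam : Fin d → ℝ)
    (hchar : H.charpoly = ∏ i : Fin d, (X - C (lam i))) (q : ℝ) :
    Matrix.det (q • (1 : Matrix (Fin d) (Fin d) ℝ) + H) = ∏ i : Fin d, (q + lam i) := by
  have h1 : q • (1 : Matrix (Fin d) (Fin d) ℝ) + H = -((-q) • 1 - H) := by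
    rw [neg_sub, neg_smul, sub_neg_eq_add, add_comm]
  rw [h1, Matrix.det_neg, ← evalCharpolyAux, hchar, eval_prod]
  simp only [eval_sub, eval_X, eval_C, Fintype.card_fin]
  have h2 : ((-1:ℝ))^d = ∏ _i : Fin d, (-1:ℝ) := by simp
  rw [h2, ← Finset.prod_mul_distrib]
  exact Finset.prod_congr rfl fun i _ => by ring

lemma evalCharpolyBlockAux {d : ℕ} (H : Matrix (Fin d) (Fin d) ℝ) (α x : ℝ)
    (hx : x + α ≠ 0) :
    Polynomial.eval x (Matrix.fromBlocks 0 1 (-H) (-(α • (1 : Matrix (Fin d) (Fin d) ℝ)))).charpoly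
      = Matrix.det ((x^2 + α*x) • (1 : Matrix (Fin d) (Fin d) ℝ) + H) := by
  set A := Matrix.fromBlocks (0 : Matrix (Fin d) (Fin d) ℝ) (1 : Matrix (Fin d) (Fin d) ℝ) (-H)
    (-(α • (1 : Matrix (Fin d) (Fin d) ℝ)))
  have h1 : Polynomial.eval x A.charpoly
      = ((charmatrix A).map (Polynomial.eval x)).det := by
    rw [Matrix.charpoly, show Polynomial.eval x (charmatrix A).det
        = (Polynomial.evalRingHom x) (charmatrix A).det from rfl, RingHom.map_det]
    rfl
  rw [h1, charmatrixMapEvalAux]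
  have h2 : x • (1 : Matrix (Fin d ⊕ Fin d) (Fin d ⊕ Fin d) ℝ) - A
      = Matrix.fromBlocks (x • 1) (-1) H ((x+α) • 1) := by
    rw [← Matrix.fromBlocks_one, Matrix.fromBlocks_smul]
    simp [A, Matrix.fromBlocks_add, add_smul]
    ext i j
    cases i <;> cases j <;> simp [Matrix.fromBlocks, add_smul]
  rw [h2]
  haveI : Invertible ((x+α) • (1 : Matrix (Fin d) (Fin d) ℝ)) :=
    invertibleOfRightInverse _ ((x+α)⁻¹ • (1 : Matrix (Fin d) (Fin d) ℝ)) (by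
      rw [Matrix.smul_mul, Matrix.mul_smul, Matrix.one_mul, smul_smul, mul_inv_cancel₀ hx,
        one_smul])
  have hinv : ⅟((x+α) • (1 : Matrix (Fin d) (Fin d) ℝ))
      = (x+α)⁻¹ • (1 : Matrix (Fin d) (Fin d) ℝ) := by
    apply invOf_eq_right_inv
    rw [Matrix.smul_mul, Matrix.mul_smul, Matrix.one_mul, smul_smul, mul_inv_cancel₀ hx, one_smul]
  rw [Matrix.det_fromBlocks₂₂, hinv]
  have h3 : (x • (1 : Matrix (Fin d) (Fin d) ℝ) - (-1) * ((x+α)⁻¹ • 1) * H)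
      = x • 1 + (x+α)⁻¹ • H := by
    rw [Matrix.neg_mul, Matrix.neg_mul, sub_neg_eq_add, Matrix.one_mul, Matrix.smul_mul,
      Matrix.one_mul]
  rw [h3, Matrix.det_smul, Matrix.det_one, mul_one, ← Matrix.det_smul]
  congr 1
  rw [smul_add, smul_smul, smul_smul, mul_inv_cancel₀ hx, one_smul]
  congr 2
  ring

lemma charpolyBlockEqAux {d : ℕ} (H : Matrix (Fin d) (Fin d) ℝ) (α : ℝ) (lam : Fin d → ℝ)
    (hchar : H.charpoly = ∏ i : Fin d, (X - C (lam i))) :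
    (Matrix.fromBlocks 0 1 (-H) (-(α • (1 : Matrix (Fin d) (Fin d) ℝ)))).charpoly
      = ∏ i : Fin d, (X^2 + C α * X + C (lam i)) := by
  apply Polynomial.eq_of_infinite_eval_eq
  apply Set.Infinite.mono _ ((Set.finite_singleton (-α)).infinite_compl)
  intro x hx
  have hx' : x + α ≠ 0 := fun h => hx (by simp only [Set.mem_singleton_iff]; linarith)
  simp only [Set.mem_setOf_eq]
  rw [evalCharpolyBlockAux H α x hx', detSmulOneAddAux H lam hchar, eval_prod]
  simp only [eval_add, eval_mul, eval_pow, eval_X, eval_C]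

theorem block_matrix_eigenvalue_count (d k : ℕ) (hk : 1 ≤ k) (hkd : k ≤ d)
    (H : Matrix (Fin d) (Fin d) ℝ) (hH : H.IsSymm) (α : ℝ) (hα : 0 < α)
    (lam : Fin d → ℝ) (hmono : Monotone lam)
    (hneg : ∀ i : Fin d, (i : ℕ) < k → lam i < 0)
    (hpos : ∀ i : Fin d, k ≤ (i : ℕ) → 0 < lam i)
    (hspec : H.charpoly.aroots ℝ = Multiset.map lam Finset.univ.val) :
    let A : Matrix (Fin d ⊕ Fin d) (Fin d ⊕ Fin d) ℝ :=
      Matrix.fromBlocks 0 1 (-H) (-(α • (1 : Matrix (Fin d) (Fin d) ℝ)))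
    ((A.charpoly.aroots ℂ).filter (fun μ => 0 < μ.re)) =
      Multiset.map (fun i : Fin d => (((-α + Real.sqrt (α ^ 2 - 4 * lam i)) / 2 : ℝ) : ℂ))
        ((Finset.univ.filter (fun i : Fin d => (i : ℕ) < k)).val) ∧
    ∀ μ ∈ A.charpoly.aroots ℂ, ¬ 0 < μ.re → μ.re < 0 := by
  intro A
  -- characteristic polynomial of H factors
  have hroots : H.charpoly.roots = Multiset.map lam Finset.univ.val := by
    have h := hspec
    rwa [aroots_def, Algebra.algebraMap_self, Polynomial.map_id] at h
  have hnd : H.charpoly.natDegree = d := by simpa using Matrix.charpoly_natDegree_eq_dim H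
  have hsplit : Splits H.charpoly := by
    rw [splits_iff_card_roots, hroots, hnd]
    simp
  have hchar : H.charpoly = ∏ i : Fin d, (X - C (lam i)) := by
    conv_lhs => rw [hsplit.eq_prod_roots_of_monic (Matrix.charpoly_monic H)]
    rw [hroots, Multiset.map_map, Finset.prod_eq_multiset_prod]
    rfl
  have hA : A.charpoly = ∏ i : Fin d, (X^2 + C α * X + C (lam i)) :=
    charpolyBlockEqAux H α lam hchar
  -- roots over ℂ
  have haroots : A.charpoly.aroots ℂ = (Finset.univ.val : Multiset (Fin d)).bind
      (fun i => {rpAux α (lam i), rnAux α (lam i)}) := by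
    rw [aroots_def, hA, Polynomial.map_prod]
    have h2 : ∀ i : Fin d, (X^2 + C α * X + C (lam i)).map (algebraMap ℝ ℂ)
        = (X - C (rpAux α (lam i))) * (X - C (rnAux α (lam i))) := by
      intro i
      rw [← quadFactorAux]
      simp [Polynomial.map_add, Polynomial.map_mul, Polynomial.map_pow]
    simp_rw [h2]
    have h3 : (∏ i : Fin d, ((X - C (rpAux α (lam i))) * (X - C (rnAux α (lam i)))))
        = (((Finset.univ.val : Multiset (Fin d)).bind
            (fun i => ({rpAux α (lam i), rnAux α (lam i)} : Multiset ℂ))).map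
            (fun a => X - C a)).prod := by
      rw [Multiset.map_bind, Multiset.prod_bind, Finset.prod_eq_multiset_prod]
      congr 1
      apply Multiset.map_congr rfl
      intro i _
      simp [Multiset.insert_eq_cons]
    rw [h3, roots_multiset_prod_X_sub_C]
  constructor
  · rw [haroots]
    have hS2 : (Finset.univ.val : Multiset (Fin d)).bind
        (fun i => ({rpAux α (lam i), rnAux α (lam i)} : Multiset ℂ))
        = Multiset.map (fun i => rpAux α (lam i)) Finset.univ.val
          + Multiset.map (fun i => rnAux α (lam i)) Finset.univ.val := by
      simp_rw [Multiset.insert_eq_cons, ← Multiset.singleton_add]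
      rw [Multiset.bind_add]
      simp [Multiset.bind_singleton]
    rw [hS2, Multiset.filter_add, Multiset.filter_map, Multiset.filter_map]
    have h4 : Multiset.filter ((fun μ : ℂ => 0 < μ.re) ∘ (fun i => rnAux α (lam i)))
        (Finset.univ.val : Multiset (Fin d)) = 0 := by
      rw [Multiset.filter_eq_nil]
      intro i _
      simp only [Function.comp]
      exact not_lt.mpr (le_of_lt (rnAux_re α (lam i) hα))
    rw [h4, Multiset.map_zero, add_zero]
    have h5 : Multiset.filter ((fun μ : ℂ => 0 < μ.re) ∘ (fun i => rpAux α (lam i)))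
        (Finset.univ.val : Multiset (Fin d))
        = Multiset.filter (fun i : Fin d => (i:ℕ) < k) (Finset.univ.val : Multiset (Fin d)) := by
      apply Multiset.filter_congr
      intro i _
      simp only [Function.comp]
      constructor
      · intro h
        by_contra hik
        exact absurd h (not_lt.mpr (le_of_lt (rpAux_re_neg α (lam i) hα
          (hpos i (not_lt.mp hik)))))
      · intro h
        exact rpAux_re_pos α (lam i) hα (hneg i h)
    rw [h5, Finset.filter_val]
    apply Multiset.map_congr rfl
    intro i hi
    rw [Multiset.mem_filter] at hi
    rw [rpAux_eq α (lam i) (hneg i hi.2)]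
  · intro μ hmem hnpos
    rw [haroots, Multiset.mem_bind] at hmem
    obtain ⟨i, -, hi⟩ := hmem
    rw [Multiset.insert_eq_cons, Multiset.mem_cons, Multiset.mem_singleton] at hi
    rcases hi with rfl | rfl
    · by_cases hik : (i:ℕ) < k
      · exact absurd (rpAux_re_pos α (lam i) hα (hneg i hik)) hnpos
      · exact rpAux_re_neg α (lam i) hα (hpos i (not_lt.mp hik))
    · exact rnAux_re α (lam i) hα
end

section
/- Let A be a real n×n matrix all of whose complex eigenvalues have real part at most -μ for some μ > 0. Then there exists a constant C ≥ 1 such that the operator norm of the matrix exponential satisfies ‖exp(sA)‖ ≤ C e^{-(μ/2) s} for all s ≥ 0. -/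
open scoped Matrix Matrix.Norms.L2Operator in
lemma aux_eigen_exp {n : ℕ} (B : Matrix (Fin n) (Fin n) ℂ) (u : Fin n → ℂ) (z : ℂ)
    (h : B *ᵥ u = z • u) :
    (NormedSpace.exp B) *ᵥ u = Complex.exp z • u := by
  have hpow : ∀ k : ℕ, (B ^ k) *ᵥ u = z ^ k • u := by
    intro k
    induction k with
    | zero => simp
    | succ k ih =>
      rw [pow_succ', ← Matrix.mulVec_mulVec, ih, Matrix.mulVec_smul, h, smul_smul, ← pow_succ]
  let f : Matrix (Fin n) (Fin n) ℂ →ₗ[ℂ] (Fin n → ℂ) :=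
    { toFun := fun M => M *ᵥ u
      map_add' := fun M N => Matrix.add_mulVec M N u
      map_smul' := fun c M => (Matrix.smul_mulVec c M u) }
  let F : Matrix (Fin n) (Fin n) ℂ →L[ℂ] (Fin n → ℂ) := LinearMap.toContinuousLinearMap f
  have hFapp : ∀ M : Matrix (Fin n) (Fin n) ℂ, F M = M *ᵥ u := fun M => rfl
  have hsum : Summable fun k : ℕ => ((Nat.factorial k : ℂ))⁻¹ • B ^ k :=
    NormedSpace.expSeries_summable' B
  have hz : Summable fun k : ℕ => ((Nat.factorial k : ℂ))⁻¹ * z ^ k :=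
    (NormedSpace.expSeries_summable' (𝕂 := ℂ) z).congr fun k => smul_eq_mul _ _
  have h2 : F (NormedSpace.exp B) = ∑' k : ℕ, (((Nat.factorial k : ℂ))⁻¹ * z ^ k) • u := by
    rw [NormedSpace.exp_eq_tsum ℂ]
    show F (∑' k : ℕ, ((Nat.factorial k : ℂ))⁻¹ • B ^ k) = _
    rw [F.map_tsum hsum]
    refine tsum_congr fun k => ?_
    rw [map_smul, hFapp, hpow, smul_smul]
  have hexp : (∑' k : ℕ, ((Nat.factorial k : ℂ))⁻¹ * z ^ k) = Complex.exp z := by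
    rw [Complex.exp_eq_exp_ℂ, NormedSpace.exp_eq_tsum ℂ]
    exact tsum_congr fun k => (smul_eq_mul _ _).symm
  calc (NormedSpace.exp B) *ᵥ u = F (NormedSpace.exp B) := (hFapp _).symm
    _ = (∑' k : ℕ, ((Nat.factorial k : ℂ))⁻¹ * z ^ k) • u := by rw [h2, hz.tsum_smul_const]
    _ = Complex.exp z • u := by rw [hexp]

open scoped Matrix Matrix.Norms.L2Operator in
lemma aux_spectral_mapping {n : ℕ} (B : Matrix (Fin n) (Fin n) ℂ) (w : ℂ)
    (hw : w ∈ spectrum ℂ (NormedSpace.exp B)) :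
    ∃ z ∈ spectrum ℂ B, w = Complex.exp z := by
  have hw' : Module.End.HasEigenvalue (Matrix.toLin' (NormedSpace.exp B)) w := by
    rw [Module.End.hasEigenvalue_iff_mem_spectrum]
    rwa [show (Matrix.toLin' (NormedSpace.exp B) : Module.End ℂ (Fin n → ℂ)) =
      Matrix.toLinAlgEquiv' (NormedSpace.exp B) from rfl, AlgEquiv.spectrum_eq]
  set L : Module.End ℂ (Fin n → ℂ) := Matrix.toLin' (NormedSpace.exp B) with hL
  set g : Module.End ℂ (Fin n → ℂ) := Matrix.toLin' B with hg
  set E := Module.End.eigenspace L w with hE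
  haveI : Nontrivial E := Submodule.nontrivial_iff_ne_bot.mpr hw'
  have hcomm : NormedSpace.exp B * B = B * NormedSpace.exp B :=
    ((Commute.refl B).exp_right).symm
  have hinv : ∀ x ∈ E, g x ∈ E := by
    intro x hx
    rw [hE, Module.End.mem_eigenspace_iff] at hx ⊢
    have : L (g x) = g (L x) := by
      show Matrix.toLin' (NormedSpace.exp B) (Matrix.toLin' B x)
        = Matrix.toLin' B (Matrix.toLin' (NormedSpace.exp B) x)
      simp only [Matrix.toLin'_apply, Matrix.mulVec_mulVec, hcomm]
    rw [this, hx, map_smul]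
  let g' := g.restrict hinv
  obtain ⟨z, hz⟩ := Module.End.exists_eigenvalue g'
  obtain ⟨u', hu'⟩ := hz.exists_hasEigenvector
  have huE : (u' : Fin n → ℂ) ∈ E := u'.2
  have hu0 : (u' : Fin n → ℂ) ≠ 0 := fun hc => hu'.2 (Subtype.coe_injective (by simpa using hc))
  have hgu : g (u' : Fin n → ℂ) = z • (u' : Fin n → ℂ) := by
    have := hu'.apply_eq_smul
    calc g (u' : Fin n → ℂ) = (g' u' : Fin n → ℂ) := rfl
      _ = z • (u' : Fin n → ℂ) := by rw [this]; rfl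
  have hmul : B *ᵥ (u' : Fin n → ℂ) = z • (u' : Fin n → ℂ) := by
    rwa [hg, Matrix.toLin'_apply] at hgu
  have hzspec : z ∈ spectrum ℂ B := by
    rw [show (spectrum ℂ B) = spectrum ℂ (Matrix.toLinAlgEquiv' B) from
      (AlgEquiv.spectrum_eq _ _).symm]
    rw [← Module.End.hasEigenvalue_iff_mem_spectrum]
    exact Module.End.hasEigenvalue_of_hasEigenvector
      ⟨Module.End.mem_eigenspace_iff.mpr (by rw [show (Matrix.toLinAlgEquiv' B :
        Module.End ℂ (Fin n → ℂ)) = g from rfl]; exact hgu), hu0⟩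
  refine ⟨z, hzspec, ?_⟩
  have h1 : (NormedSpace.exp B) *ᵥ (u' : Fin n → ℂ) = w • (u' : Fin n → ℂ) := by
    have := Module.End.mem_eigenspace_iff.mp huE
    rwa [hL, Matrix.toLin'_apply] at this
  have h2 := aux_eigen_exp B (u' : Fin n → ℂ) z hmul
  rw [h1] at h2
  have := sub_smul w (Complex.exp z) (u' : Fin n → ℂ)
  rw [h2, sub_self] at this
  rcases smul_eq_zero.mp this with h | h
  · exact sub_eq_zero.mp h
  · exact absurd h hu0

open scoped Matrix Matrix.Norms.L2Operator in
lemma aux_bridge {n : ℕ} (M : Matrix (Fin n) (Fin n) ℝ) (v : EuclideanSpace ℝ (Fin n)) :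
    ‖Matrix.toEuclideanLin M v‖ ≤ ‖M.map (algebraMap ℝ ℂ)‖ * ‖v‖ := by
  set Mc := M.map (algebraMap ℝ ℂ) with hMc
  set vc : EuclideanSpace ℂ (Fin n) :=
    (WithLp.equiv 2 (Fin n → ℂ)).symm (fun i => (v i : ℂ)) with hvc
  have hnv : ‖vc‖ = ‖v‖ := by
    rw [EuclideanSpace.norm_eq, EuclideanSpace.norm_eq]
    congr 1
    refine Finset.sum_congr rfl fun i _ => ?_
    have : vc i = (v i : ℂ) := rfl
    rw [this, Complex.norm_real]
  have hcoord : ∀ i, (Mc *ᵥ vc) i = ((M *ᵥ (WithLp.equiv 2 (Fin n → ℝ)) v) i : ℂ) := by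
    intro i
    simp only [Matrix.mulVec, dotProduct, hMc, Matrix.map_apply]
    push_cast
    rfl
  have hn2 : ‖(EuclideanSpace.equiv (Fin n) ℂ).symm (Mc *ᵥ vc)‖ = ‖Matrix.toEuclideanLin M v‖ := by
    rw [EuclideanSpace.norm_eq, EuclideanSpace.norm_eq]
    congr 1
    refine Finset.sum_congr rfl fun i _ => ?_
    have h1 : (EuclideanSpace.equiv (Fin n) ℂ).symm (Mc *ᵥ vc) i = (Mc *ᵥ vc) i := rfl
    have h2 : Matrix.toEuclideanLin M v i = (M *ᵥ (WithLp.equiv 2 (Fin n → ℝ)) v) i := rfl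
    rw [h1, h2, hcoord i, Complex.norm_real]
  have h := Matrix.l2_opNorm_mulVec Mc vc
  rw [hn2, hnv] at h
  exact h

open scoped Matrix Matrix.Norms.L2Operator in
lemma aux_main (n : ℕ) (A : Matrix (Fin n) (Fin n) ℝ) (mu : ℝ)
    (hmu : 0 < mu)
    (hspec : ∀ z ∈ spectrum ℂ (A.map (algebraMap ℝ ℂ)), z.re ≤ -mu) :
    ∃ C : ℝ, 1 ≤ C ∧ ∀ s ≥ (0 : ℝ), ∀ v : EuclideanSpace ℝ (Fin n),
      ‖(Matrix.toEuclideanLin (NormedSpace.exp (s • A))) v‖ ≤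
        C * Real.exp (-(mu / 2) * s) * ‖v‖ := by
  classical
  letI : NormedAlgebra ℚ (Matrix (Fin n) (Fin n) ℂ) := .restrictScalars ℚ ℂ _
  letI : NormedAlgebra ℚ (Matrix (Fin n) (Fin n) ℝ) := .restrictScalars ℚ ℝ _
  set Ac : Matrix (Fin n) (Fin n) ℂ := A.map (algebraMap ℝ ℂ) with hAc
  set B : Matrix (Fin n) (Fin n) ℂ := NormedSpace.exp Ac with hB
  -- spectral radius bound via the spectral mapping theorem
  have hrad : spectralRadius ℂ B ≤ ENNReal.ofReal (Real.exp (-mu)) := by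
    rw [spectralRadius]
    refine iSup₂_le fun w hw => ?_
    obtain ⟨z, hz, rfl⟩ := aux_spectral_mapping Ac w hw
    rw [← ENNReal.ofReal_coe_nnreal, coe_nnnorm]
    refine ENNReal.ofReal_le_ofReal ?_
    rw [Complex.norm_exp]
    exact Real.exp_le_exp.mpr (hspec z hz)
  have hlt : spectralRadius ℂ B < ENNReal.ofReal (Real.exp (-(mu/2))) := by
    refine hrad.trans_lt ?_
    rw [ENNReal.ofReal_lt_ofReal_iff (Real.exp_pos _)]
    exact Real.exp_lt_exp.mpr (by linarith)
  have htend := spectrum.pow_nnnorm_pow_one_div_tendsto_nhds_spectralRadius B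
  have hev : ∀ᶠ k : ℕ in Filter.atTop,
      ((‖B ^ k‖₊ : ENNReal) ^ (1/(k:ℝ))) < ENNReal.ofReal (Real.exp (-(mu/2))) :=
    htend.eventually_lt_const hlt
  obtain ⟨K₀, hK₀⟩ := Filter.eventually_atTop.mp hev
  set K : ℕ := K₀ + 1 with hK
  have hBk : ∀ k : ℕ, K ≤ k → ‖B ^ k‖ ≤ Real.exp (-(mu/2) * k) := by
    intro k hk
    have hk1 : 1 ≤ k := le_trans (Nat.le_add_left 1 K₀) hk
    have h := (hK₀ k (le_trans (Nat.le_add_right K₀ 1) hk)).le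
    have h2 := ENNReal.rpow_le_rpow h (le_of_lt (by positivity : (0:ℝ) < (k:ℝ)))
    rw [← ENNReal.rpow_mul, one_div,
      inv_mul_cancel₀ (by positivity : ((k:ℕ):ℝ) ≠ 0), ENNReal.rpow_one] at h2
    rw [ENNReal.ofReal_rpow_of_pos (Real.exp_pos _), ← ENNReal.ofReal_coe_nnreal, coe_nnnorm] at h2
    have h3 := (ENNReal.ofReal_le_ofReal_iff (by positivity)).mp h2
    calc ‖B ^ k‖ ≤ Real.exp (-(mu/2)) ^ ((k:ℕ):ℝ) := h3
      _ = Real.exp (-(mu/2) * k) := by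
          rw [Real.rpow_natCast, ← Real.exp_nat_mul, mul_comm]
  -- bound on a compact initial interval
  have hcont : Continuous fun t : ℝ => NormedSpace.exp (t • Ac) :=
    NormedSpace.exp_continuous.comp (continuous_id.smul continuous_const)
  obtain ⟨Mb, hMb⟩ := (isCompact_Icc (a := (0:ℝ)) (b := (K:ℝ)+1)).exists_bound_of_continuousOn
    hcont.continuousOn
  have hMb0 : 0 ≤ Mb := le_trans (norm_nonneg _) (hMb 0 ⟨le_refl _, by positivity⟩)
  set C := max 1 (Mb * Real.exp ((mu/2) * ((K:ℝ)+1))) with hC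
  have hCge : Mb * Real.exp ((mu/2) * ((K:ℝ)+1)) ≤ C := le_max_right _ _
  -- the main estimate on the complex side
  have hgs : ∀ s : ℝ, 0 ≤ s → ‖NormedSpace.exp (s • Ac)‖ ≤ C * Real.exp (-(mu / 2) * s) := by
    intro s hs
    by_cases hsK : s ≤ (K:ℝ) + 1
    · have h1 : ‖NormedSpace.exp (s • Ac)‖ ≤ Mb := hMb s ⟨hs, hsK⟩
      have h4 : Mb * Real.exp ((mu/2) * s) ≤ C := by
        refine le_trans ?_ hCge
        have := Real.exp_le_exp.mpr (by nlinarith : (mu/2) * s ≤ (mu/2) * ((K:ℝ)+1))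
        nlinarith [Real.exp_pos ((mu/2) * s)]
      have h5 : Mb ≤ C * Real.exp (-(mu / 2) * s) := by
        rw [show -(mu/2) * s = -((mu/2) * s) by ring, Real.exp_neg, ← div_eq_mul_inv,
          le_div_iff₀ (Real.exp_pos _)]
        exact h4
      exact le_trans h1 h5
    · push_neg at hsK
      set k : ℕ := ⌊s⌋₊ with hk
      have hks : (k:ℝ) ≤ s := Nat.floor_le hs
      have hsk1 : s < (k:ℝ) + 1 := Nat.lt_floor_add_one s
      have hkK : K ≤ k := Nat.le_floor (by linarith : ((K:ℕ):ℝ) ≤ s)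
      set r : ℝ := s - k with hr
      have hr0 : 0 ≤ r := by simp [hr]; linarith
      have hr1 : r ≤ 1 := by simp [hr]; linarith
      have hsplit : NormedSpace.exp (s • Ac)
          = NormedSpace.exp ((k:ℝ) • Ac) * NormedSpace.exp (r • Ac) := by
        rw [← NormedSpace.exp_add_of_commute (((Commute.refl Ac).smul_left (k:ℝ)).smul_right r)]
        rw [← add_smul]
        congr 1
        simp [hr]
      have hpow : NormedSpace.exp ((k:ℝ) • Ac) = (NormedSpace.exp Ac) ^ k := by
        rw [Nat.cast_smul_eq_nsmul ℝ k Ac]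
        exact NormedSpace.exp_nsmul k Ac
      calc ‖NormedSpace.exp (s • Ac)‖
          ≤ ‖(NormedSpace.exp Ac) ^ k‖ * ‖NormedSpace.exp (r • Ac)‖ := by
            rw [hsplit, hpow]; exact norm_mul_le _ _
        _ ≤ Real.exp (-(mu/2) * k) * Mb := by
            refine mul_le_mul (hBk k hkK) (hMb r ⟨hr0, by nlinarith⟩)
              (norm_nonneg _) (Real.exp_pos _).le
        _ ≤ C * Real.exp (-(mu / 2) * s) := by
            rw [show -(mu/2) * (k:ℝ) = (mu/2)*r + -(mu/2)*s by rw [hr]; ring, Real.exp_add]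
            have h7 : Real.exp ((mu/2)*r) ≤ Real.exp ((mu/2)*((K:ℝ)+1)) :=
              Real.exp_le_exp.mpr (by nlinarith)
            have h8 : Mb * Real.exp ((mu/2)*r) ≤ C :=
              le_trans (mul_le_mul_of_nonneg_left h7 hMb0) hCge
            nlinarith [mul_le_mul_of_nonneg_right h8 (Real.exp_pos (-(mu/2)*s)).le]
  refine ⟨C, le_max_left _ _, ?_⟩
  intro s hs v
  have hmap : (NormedSpace.exp (s • A)).map (algebraMap ℝ ℂ) = NormedSpace.exp (s • Ac) := by
    have hc : Continuous fun M : Matrix (Fin n) (Fin n) ℝ => M.map (algebraMap ℝ ℂ) :=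
      Continuous.matrix_map continuous_id (continuous_algebraMap ℝ ℂ)
    have h1 := NormedSpace.map_exp
      ((algebraMap ℝ ℂ).mapMatrix : Matrix (Fin n) (Fin n) ℝ →+* Matrix (Fin n) (Fin n) ℂ)
      hc (s • A)
    have h2 : ((algebraMap ℝ ℂ).mapMatrix : Matrix (Fin n) (Fin n) ℝ →+* _) (s • A)
        = s • Ac := by
      ext i j
      simp [RingHom.mapMatrix_apply, Matrix.map_apply, Matrix.smul_apply, hAc, Complex.real_smul]
    have h3 : NormedSpace.exp (s • Ac) = NormedSpace.exp (s • Ac) :=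
      rfl
    calc (NormedSpace.exp (s • A)).map (algebraMap ℝ ℂ)
        = NormedSpace.exp (((algebraMap ℝ ℂ).mapMatrix : Matrix (Fin n) (Fin n) ℝ →+* _)
            (s • A)) := h1
      _ = NormedSpace.exp (s • Ac) := by rw [h2]
      _ = NormedSpace.exp (s • Ac) := h3
  have hb := aux_bridge (NormedSpace.exp (s • A)) v
  rw [hmap] at hb
  calc ‖(Matrix.toEuclideanLin (NormedSpace.exp (s • A))) v‖
      ≤ ‖NormedSpace.exp (s • Ac)‖ * ‖v‖ := hb
    _ ≤ C * Real.exp (-(mu / 2) * s) * ‖v‖ :=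
        mul_le_mul_of_nonneg_right (hgs s hs) (norm_nonneg v)

theorem matrix_exp_decay (n : ℕ) (A : Matrix (Fin n) (Fin n) ℝ) (mu : ℝ)
    (hmu : 0 < mu)
    (hspec : ∀ z ∈ spectrum ℂ (A.map (algebraMap ℝ ℂ)), z.re ≤ -mu) :
    ∃ C : ℝ, 1 ≤ C ∧ ∀ s ≥ (0 : ℝ), ∀ v : EuclideanSpace ℝ (Fin n),
      ‖(Matrix.toEuclideanLin (NormedSpace.exp (s • A))) v‖ ≤
        C * Real.exp (-(mu / 2) * s) * ‖v‖ := by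
  exact aux_main n A mu hmu hspec
end

section
/- Let H be a symmetric d×d real matrix with smallest eigenvalue λ_min ≤ -γ₁ < 0 and let α > 0. Then the largest real part among the eigenvalues of A = [[0, I], [-H, -αI]] equals μ₀ = (-α + √(α² - 4λ_min))/2, and μ₀ ≥ (-α + √(α² + 4γ₁))/2 > 0. -/
open Matrix
open scoped ComplexOrder

theorem my_mem_spectrum_iff_exists {n : Type*} [Fintype n] [DecidableEq n] {K : Type*} [Field K]
    (M : Matrix n n K) (μ : K) :
    μ ∈ spectrum K M ↔ ∃ v, v ≠ 0 ∧ M.mulVec v = μ • v := by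
  rw [spectrum.mem_iff]
  rw [Matrix.isUnit_iff_isUnit_det, isUnit_iff_ne_zero, not_not,
    ← Matrix.exists_mulVec_eq_zero_iff]
  constructor
  · rintro ⟨v, hv0, hv⟩
    refine ⟨v, hv0, ?_⟩
    have : (algebraMap K (Matrix n n K) μ - M) *ᵥ v = μ • v - M *ᵥ v := by
      rw [Matrix.sub_mulVec, Algebra.algebraMap_eq_smul_one, Matrix.smul_mulVec,
        Matrix.one_mulVec]
    rw [this, sub_eq_zero] at hv
    exact hv.symm
  · rintro ⟨v, hv0, hv⟩
    refine ⟨v, hv0, ?_⟩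
    rw [Matrix.sub_mulVec, Algebra.algebraMap_eq_smul_one, Matrix.smul_mulVec,
      Matrix.one_mulVec, hv, sub_self]

theorem my_mem_spectrum_iff_det {n : Type*} [Fintype n] [DecidableEq n] {K : Type*} [Field K]
    (M : Matrix n n K) (μ : K) :
    μ ∈ spectrum K M ↔ (μ • (1 : Matrix n n K) - M).det = 0 := by
  rw [spectrum.mem_iff, Matrix.isUnit_iff_isUnit_det, isUnit_iff_ne_zero, not_not,
    Algebra.algebraMap_eq_smul_one]

theorem my_eig_real {n : Type*} [Fintype n] (M : Matrix n n ℂ) (hM : Mᴴ = M)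
    (v : n → ℂ) (hv0 : v ≠ 0) (lam : ℂ) (h : M.mulVec v = lam • v) :
    lam = (lam.re : ℂ) := by
  set s : ℂ := star v ⬝ᵥ v with hs
  have hs_star : star s = s := (Matrix.star_dotProduct v v).symm
  have hs0 : s ≠ 0 := fun hz => hv0 (dotProduct_star_self_eq_zero.mp hz)
  set c : ℂ := star v ⬝ᵥ M.mulVec v with hc
  have hc1 : c = lam * s := by
    rw [hc, h]
    simp [dotProduct_smul, hs, smul_eq_mul]
  have hc_star : star c = c := by
    have h1 : c = star (star (M *ᵥ v) ⬝ᵥ v) := Matrix.star_dotProduct _ _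
    calc star c = star (M *ᵥ v) ⬝ᵥ v := by rw [h1, star_star]
    _ = (star v ᵥ* Mᴴ) ⬝ᵥ v := by rw [Matrix.star_mulVec]
    _ = star v ⬝ᵥ (M *ᵥ v) := by rw [hM, ← Matrix.dotProduct_mulVec]
    _ = c := hc.symm
  have : star lam * s = lam * s := by
    calc star lam * s = star lam * star s := by rw [hs_star]
    _ = star (lam * s) := by rw [← star_mul']
    _ = star c := by rw [hc1]
    _ = c := hc_star
    _ = lam * s := hc1
  have hlam : star lam = lam := mul_right_cancel₀ hs0 this
  exact (Complex.conj_eq_iff_re.mp hlam).symm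

theorem largest_real_part_eigenvalue (d : ℕ) (H : Matrix (Fin d) (Fin d) ℝ)
    (hH : H.IsSymm) (γ₁ α lamMin : ℝ) (hγ : 0 < γ₁) (hα : 0 < α)
    (hmem : lamMin ∈ spectrum ℝ H)
    (hmin : ∀ lam ∈ spectrum ℝ H, lamMin ≤ lam)
    (hbound : lamMin ≤ -γ₁) :
    let A : Matrix (Fin d ⊕ Fin d) (Fin d ⊕ Fin d) ℝ :=
      Matrix.fromBlocks 0 1 (-H) (-(α • (1 : Matrix (Fin d) (Fin d) ℝ)))
    let μ₀ := (-α + Real.sqrt (α ^ 2 - 4 * lamMin)) / 2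
    IsGreatest {x : ℝ | ∃ μ ∈ spectrum ℂ (A.map (algebraMap ℝ ℂ)), μ.re = x} μ₀ ∧
    (-α + Real.sqrt (α ^ 2 + 4 * γ₁)) / 2 ≤ μ₀ ∧
    0 < (-α + Real.sqrt (α ^ 2 + 4 * γ₁)) / 2 := by
  intro A μ₀
  set HC : Matrix (Fin d) (Fin d) ℂ := H.map (algebraMap ℝ ℂ) with hHC
  have hMC : A.map (algebraMap ℝ ℂ) =
      Matrix.fromBlocks 0 1 (-HC) (-((α : ℂ) • (1 : Matrix (Fin d) (Fin d) ℂ))) := by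
    show (Matrix.fromBlocks 0 1 (-H) (-(α • (1 : Matrix (Fin d) (Fin d) ℝ)))).map _ = _
    rw [Matrix.fromBlocks_map]
    ext i j
    cases i <;> cases j <;>
      simp [hHC, Matrix.one_apply, apply_ite (algebraMap ℝ ℂ)] <;>
      (try split <;> simp)
  -- discriminant facts
  set s := Real.sqrt (α ^ 2 - 4 * lamMin) with hsdef
  have hdisc : α ^ 2 + 4 * γ₁ ≤ α ^ 2 - 4 * lamMin := by linarith
  have hdpos : (0:ℝ) < α ^ 2 - 4 * lamMin := by nlinarith
  have hsq : s ^ 2 = α ^ 2 - 4 * lamMin := Real.sq_sqrt hdpos.le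
  have hsnn : 0 ≤ s := Real.sqrt_nonneg _
  have hquad : μ₀ ^ 2 + α * μ₀ + lamMin = 0 := by
    show ((-α + s) / 2) ^ 2 + α * ((-α + s) / 2) + lamMin = 0
    linear_combination hsq / 4
  have hμ₀pos : 0 < μ₀ := by
    have : α < s := by nlinarith
    show 0 < (-α + s) / 2
    linarith
  -- HC is Hermitian
  have hHerm : HCᴴ = HC := by
    ext i j
    simp only [hHC, Matrix.conjTranspose_apply, Matrix.map_apply, Complex.coe_algebraMap,
      Complex.star_def, Complex.conj_ofReal, Complex.ofReal_inj]
    exact congrFun (congrFun hH i) j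
  -- membership of μ₀
  obtain ⟨v, hv0, hv⟩ := (my_mem_spectrum_iff_exists H lamMin).mp hmem
  set vC : Fin d → ℂ := fun i => (v i : ℂ) with hvC
  have hHCv : HC.mulVec vC = fun j => (lamMin : ℂ) * v j := by
    funext j
    have h1 : (HC *ᵥ fun x => (algebraMap ℝ ℂ) (v x)) j = (algebraMap ℝ ℂ) ((H *ᵥ v) j) :=
      (RingHom.map_mulVec (algebraMap ℝ ℂ) H v j).symm
    simp only [Complex.coe_algebraMap] at h1
    rw [hvC, h1, hv]
    push_cast
    simp
  have hmemμ₀ : ((μ₀ : ℂ)) ∈ spectrum ℂ (A.map (algebraMap ℝ ℂ)) := by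
    rw [my_mem_spectrum_iff_exists, hMC]
    refine ⟨Sum.elim vC (fun i => (μ₀ : ℂ) * v i), ?_, ?_⟩
    · obtain ⟨i, hi⟩ := Function.ne_iff.mp hv0
      intro hz
      exact hi (by simpa [hvC] using congrFun hz (Sum.inl i))
    · rw [Matrix.fromBlocks_mulVec]
      simp only [Sum.elim_comp_inl, Sum.elim_comp_inr, Matrix.zero_mulVec,
        Matrix.one_mulVec, zero_add, Matrix.neg_mulVec, Matrix.smul_mulVec,
        Matrix.one_mulVec, hHCv]
      funext i
      have hq : (μ₀ : ℂ) ^ 2 + (α : ℂ) * μ₀ + lamMin = 0 := by exact_mod_cast hquad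
      cases i with
      | inl i => simp [hvC]
      | inr i =>
        simp only [Sum.elim_inr, Pi.add_apply, Pi.neg_apply, Pi.smul_apply, smul_eq_mul,
          Pi.smul_apply, Sum.elim_inl]
        linear_combination (-(v i : ℂ)) * hq
  refine ⟨⟨⟨(μ₀ : ℂ), hmemμ₀, Complex.ofReal_re μ₀⟩, ?_⟩, ?_, ?_⟩
  · -- upper bound
    rintro x ⟨μ, hμ, rfl⟩
    rw [my_mem_spectrum_iff_exists, hMC] at hμ
    obtain ⟨w, hw0, hw⟩ := hμ
    set xx : Fin d → ℂ := w ∘ Sum.inl with hxx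
    set yy : Fin d → ℂ := w ∘ Sum.inr with hyy
    have hwelim : w = Sum.elim xx yy := by funext i; cases i <;> rfl
    rw [hwelim, Matrix.fromBlocks_mulVec] at hw
    simp only [Sum.elim_comp_inl, Sum.elim_comp_inr, Matrix.zero_mulVec,
      Matrix.one_mulVec, zero_add, Matrix.neg_mulVec, Matrix.smul_mulVec,
      Matrix.one_mulVec] at hw
    have htop : ∀ i, yy i = μ * xx i := by
      intro i
      simpa using congrFun hw (Sum.inl i)
    have hbot : ∀ i, HC.mulVec xx i = (-(μ ^ 2 + (α : ℂ) * μ)) * xx i := by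
      intro i
      have h1 := congrFun hw (Sum.inr i)
      simp only [Sum.elim_inr, Pi.add_apply, Pi.neg_apply, Pi.smul_apply, smul_eq_mul] at h1
      linear_combination -h1 - ((α : ℂ) + μ) * htop i
    have hxx0 : xx ≠ 0 := by
      intro hz
      apply hw0
      funext i
      cases i with
      | inl i => exact congrFun hz i
      | inr i =>
        have : yy i = 0 := by rw [htop i, congrFun hz i]; simp
        exact this
    set lam : ℂ := -(μ ^ 2 + (α : ℂ) * μ) with hlam
    have hmulvec : HC *ᵥ xx = lam • xx := by
      funext i
      simpa [smul_eq_mul] using hbot i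
    have hlamre : lam = (lam.re : ℂ) := my_eig_real HC hHerm xx hxx0 lam hmulvec
    have hcspec : lam ∈ spectrum ℂ HC :=
      (my_mem_spectrum_iff_exists HC lam).mpr ⟨xx, hxx0, hmulvec⟩
    rw [my_mem_spectrum_iff_det] at hcspec
    have hmapdet : algebraMap ℝ ℂ ((lam.re • (1 : Matrix (Fin d) (Fin d) ℝ) - H).det)
        = (lam • (1 : Matrix (Fin d) (Fin d) ℂ) - HC).det := by
      rw [RingHom.map_det]
      congr 1
      ext i j
      by_cases hij : i = j <;>
        simp [hij, Matrix.one_apply, hHC, Matrix.map_apply, ← hlamre]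
    have hlamspec : lam.re ∈ spectrum ℝ H := by
      rw [my_mem_spectrum_iff_det]
      have h9 := hmapdet.trans hcspec
      simp only [Complex.coe_algebraMap] at h9
      exact_mod_cast h9
    have hge : lamMin ≤ lam.re := hmin _ hlamspec
    have heq : μ ^ 2 + (α : ℂ) * μ + (lam.re : ℂ) = 0 := by
      rw [← hlamre, hlam]; ring
    set a := μ.re with ha
    set b := μ.im with hb
    have hre : a ^ 2 - b ^ 2 + α * a + lam.re = 0 := by
      have h10 := congrArg Complex.re heq
      simp only [Complex.add_re, Complex.mul_re, Complex.ofReal_re, Complex.ofReal_im,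
        Complex.zero_re, pow_two, ← ha, ← hb] at h10
      linarith [h10]
    have him : b * (2 * a + α) = 0 := by
      have h11 := congrArg Complex.im heq
      simp only [Complex.add_im, Complex.mul_im, Complex.ofReal_re, Complex.ofReal_im,
        Complex.zero_im, pow_two, ← ha, ← hb] at h11
      linarith [h11]
    rcases mul_eq_zero.mp him with hb0 | hcase
    · rw [hb0] at hre
      by_contra hcon
      push_neg at hcon
      nlinarith [hre, hquad, hge, hμ₀pos, hcon]
    · have : a = -α / 2 := by linarith
      rw [this]
      linarith
  · show (-α + Real.sqrt (α ^ 2 + 4 * γ₁)) / 2 ≤ (-α + s) / 2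
    have := Real.sqrt_le_sqrt hdisc
    rw [← hsdef] at this
    linarith
  · have h1 : α < Real.sqrt (α ^ 2 + 4 * γ₁) := by
      nlinarith [Real.sq_sqrt (by positivity : (0:ℝ) ≤ α ^ 2 + 4 * γ₁),
        Real.sqrt_nonneg (α ^ 2 + 4 * γ₁)]
    linarith
end
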